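/- Let n ≥ 1 and let G be the subgroup of the symmetric group on {1,…,2n} consisting of all permutations g such that for every i with 1 ≤ i ≤ n there is some j with g({2i−1,2i}) = {2j−1,2j} (so G is isomorphic to the wreath product S_2 ≀ S_n). Then for every permutation τ of {1,…,2n}, the set {g∘τ : g ∈ G} contains exactly one permutation σ satisfying: σ⁻¹(2i−1) < σ⁻¹(2i) for all 1 ≤ i ≤ n, and σ⁻¹(2i−1) < σ⁻¹(2i+1) for all 1 ≤ i ≤ n−1. Moreover, this σ is the lexicographically smallest element of {g∘τ : g ∈ G}, where permutations are compared lexicographically via their one-line words (σ(1), σ(2), …, σ(2n)). -/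

import Mathlib

namespace Stmt2

/-- The element of `Fin (2*n)` corresponding to `2*i-1` in 1-based notation
(the first element of the `i`-th pair). -/
def pA {n : ℕ} (i : Fin n) : Fin (2 * n) :=
  ⟨2 * i.val, by have := i.isLt; omega⟩

/-- The element of `Fin (2*n)` corresponding to `2*i` in 1-based notation
(the second element of the `i`-th pair). -/
def pB {n : ℕ} (i : Fin n) : Fin (2 * n) :=
  ⟨2 * i.val + 1, by have := i.isLt; omega⟩

/-- The predicate defining the wreath product subgroup `S_2 ≀ S_n` inside
`Sym({1,…,2n})`: every pair `{2i-1, 2i}` is carried to some pair `{2j-1, 2j}`. -/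
def IsPairPerm {n : ℕ} (g : Equiv.Perm (Fin (2 * n))) : Prop :=
  ∀ i : Fin n, ∃ j : Fin n, ⇑g '' {pA i, pB i} = ({pA j, pB j} : Set (Fin (2 * n)))

/-- Lexicographic comparison of one-line words of permutations. -/
def PermLexLt {n : ℕ} (σ τ : Equiv.Perm (Fin (2 * n))) : Prop :=
  ∃ k : Fin (2 * n), (∀ j : Fin (2 * n), j < k → σ j = τ j) ∧ σ k < τ k

/-- The canonical-representative condition: `σ⁻¹(2i-1) < σ⁻¹(2i)` for all
`1 ≤ i ≤ n`, and `σ⁻¹(2i-1) < σ⁻¹(2i+1)` for all `1 ≤ i ≤ n-1`. -/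
def IsCanonical {n : ℕ} (σ : Equiv.Perm (Fin (2 * n))) : Prop :=
  (∀ i : Fin n, σ.symm (pA i) < σ.symm (pB i)) ∧
  (∀ i j : Fin n, (j : ℕ) = (i : ℕ) + 1 → σ.symm (pA i) < σ.symm (pA j))

variable {n : ℕ}

lemma pA_inj {i j : Fin n} (h : pA i = pA j) : i = j := by
  have := congrArg Fin.val h
  simp only [pA] at this
  exact Fin.ext (by omega)

lemma pB_inj {i j : Fin n} (h : pB i = pB j) : i = j := by
  have := congrArg Fin.val h
  simp only [pB] at this
  exact Fin.ext (by omega)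

lemma pA_ne_pB (i j : Fin n) : pA i ≠ pB j := by
  intro h
  have := congrArg Fin.val h
  simp only [pA, pB] at this
  omega

lemma pA_lt_pB' {i j : Fin n} (h : i ≤ j) : pA i < pB j := by
  have : (i : ℕ) ≤ (j : ℕ) := h
  simp only [pA, pB, Fin.mk_lt_mk]
  omega

lemma pA_lt_pB (i : Fin n) : pA i < pB i := pA_lt_pB' le_rfl

lemma pA_lt_pA {i j : Fin n} (h : i < j) : pA i < pA j := by
  have : (i : ℕ) < (j : ℕ) := h
  simp only [pA, Fin.mk_lt_mk]
  omega

lemma exists_pair (m : Fin (2 * n)) : ∃ i : Fin n, m = pA i ∨ m = pB i := by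
  have hm := m.isLt
  refine ⟨⟨m.val / 2, by omega⟩, ?_⟩
  rcases Nat.mod_two_eq_zero_or_one m.val with h | h
  · left; apply Fin.ext; simp only [pA]; omega
  · right; apply Fin.ext; simp only [pB]; omega

/-- A convenient form of `IsPairPerm`. -/
def PairCases (g : Equiv.Perm (Fin (2 * n))) : Prop :=
  ∀ i : Fin n, ∃ j : Fin n,
    (g (pA i) = pA j ∧ g (pB i) = pB j) ∨ (g (pA i) = pB j ∧ g (pB i) = pA j)

lemma isPairPerm_iff (g : Equiv.Perm (Fin (2 * n))) : IsPairPerm g ↔ PairCases g := by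
  constructor
  · intro hg i
    obtain ⟨j, hj⟩ := hg i
    rw [Set.image_pair, Set.pair_eq_pair_iff] at hj
    exact ⟨j, hj⟩
  · intro hg i
    obtain ⟨j, hj | hj⟩ := hg i
    · exact ⟨j, by rw [Set.image_pair, hj.1, hj.2]⟩
    · exact ⟨j, by rw [Set.image_pair, hj.1, hj.2, Set.pair_comm]⟩

lemma pairCases_one : PairCases (1 : Equiv.Perm (Fin (2 * n))) :=
  fun i => ⟨i, Or.inl ⟨rfl, rfl⟩⟩

lemma pairCases_mul {g₁ g₂ : Equiv.Perm (Fin (2 * n))} (h₁ : PairCases g₁)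
    (h₂ : PairCases g₂) : PairCases (g₁ * g₂) := by
  intro i
  obtain ⟨j, hj | hj⟩ := h₂ i <;> obtain ⟨l, hl | hl⟩ := h₁ j
  · exact ⟨l, Or.inl ⟨by simp [Equiv.Perm.mul_apply, hj.1, hl.1],
      by simp [Equiv.Perm.mul_apply, hj.2, hl.2]⟩⟩
  · exact ⟨l, Or.inr ⟨by simp [Equiv.Perm.mul_apply, hj.1, hl.1],
      by simp [Equiv.Perm.mul_apply, hj.2, hl.2]⟩⟩
  · exact ⟨l, Or.inr ⟨by simp [Equiv.Perm.mul_apply, hj.1, hl.2],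
      by simp [Equiv.Perm.mul_apply, hj.2, hl.1]⟩⟩
  · exact ⟨l, Or.inl ⟨by simp [Equiv.Perm.mul_apply, hj.1, hl.2],
      by simp [Equiv.Perm.mul_apply, hj.2, hl.1]⟩⟩

lemma pairCases_inv {g : Equiv.Perm (Fin (2 * n))} (hg : PairCases g) : PairCases g⁻¹ := by
  classical
  choose φ hφ using hg
  have hinj : Function.Injective φ := by
    intro a b hab
    rcases hφ a with h1 | h1 <;> rcases hφ b with h2 | h2
    · exact pA_inj (g.injective (by rw [h1.1, h2.1, hab]))
    · exact absurd (g.injective (by rw [h1.1, h2.2, hab])) (pA_ne_pB a b)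
    · exact absurd (g.injective (by rw [h2.1, h1.2, hab])).symm (pA_ne_pB b a)
    · exact pB_inj (g.injective (by rw [h1.2, h2.2, hab]))
  have hsurj : Function.Surjective φ := Finite.injective_iff_surjective.1 hinj
  intro j
  obtain ⟨i, rfl⟩ := hsurj j
  rcases hφ i with h1 | h1
  · refine ⟨i, Or.inl ⟨?_, ?_⟩⟩
    · rw [← h1.1]; exact g.symm_apply_apply _
    · rw [← h1.2]; exact g.symm_apply_apply _
  · refine ⟨i, Or.inr ⟨?_, ?_⟩⟩
    · rw [← h1.2]; exact g.symm_apply_apply _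
    · rw [← h1.1]; exact g.symm_apply_apply _

lemma fixA_fixB {h : Equiv.Perm (Fin (2 * n))} (hP : PairCases h) {i : Fin n}
    (hfix : h (pA i) = pA i) : h (pB i) = pB i := by
  obtain ⟨j, hj | hj⟩ := hP i
  · have : i = j := pA_inj (hfix ▸ hj.1 : pA i = pA j)
    rw [hj.2, ← this]
  · exact absurd (hfix ▸ hj.1 : pA i = pB j) (pA_ne_pB i j)

lemma exists_first_diff {f g : Fin (2 * n) → Fin (2 * n)} (hne : ∃ k, f k ≠ g k) :
    ∃ k, f k ≠ g k ∧ ∀ j, j < k → f j = g j := by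
  classical
  let D : Finset (Fin (2 * n)) := Finset.univ.filter (fun k => f k ≠ g k)
  have hD : D.Nonempty := by
    obtain ⟨k, hk⟩ := hne
    exact ⟨k, by simp [D, hk]⟩
  refine ⟨D.min' hD, ?_, ?_⟩
  · have := Finset.min'_mem D hD
    simpa [D] using this
  · intro j hj
    by_contra hcon
    have hjD : j ∈ D := by simp [D, hcon]
    exact absurd (Finset.min'_le D j hjD) (not_le.2 hj)

lemma permLexLt_asymm {σ τ : Equiv.Perm (Fin (2 * n))} (h1 : PermLexLt σ τ)
    (h2 : PermLexLt τ σ) : False := by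
  obtain ⟨k1, hb1, hl1⟩ := h1
  obtain ⟨k2, hb2, hl2⟩ := h2
  rcases lt_trichotomy k1 k2 with h | h | h
  · rw [hb2 k1 h] at hl1; exact lt_irrefl _ hl1
  · subst h; exact lt_irrefl _ (hl1.trans hl2)
  · rw [hb1 k2 h] at hl2; exact lt_irrefl _ hl2

lemma permLexLt_trans {σ τ ρ : Equiv.Perm (Fin (2 * n))} (h1 : PermLexLt σ τ)
    (h2 : PermLexLt τ ρ) : PermLexLt σ ρ := by
  obtain ⟨k1, hb1, hl1⟩ := h1
  obtain ⟨k2, hb2, hl2⟩ := h2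
  rcases lt_trichotomy k1 k2 with h | h | h
  · exact ⟨k1, fun j hj => (hb1 j hj).trans (hb2 j (hj.trans h)),
      by rw [← hb2 k1 h]; exact hl1⟩
  · subst h; exact ⟨k1, fun j hj => (hb1 j hj).trans (hb2 j hj), hl1.trans hl2⟩
  · exact ⟨k2, fun j hj => (hb1 j (hj.trans h)).trans (hb2 j hj),
      by rw [hb1 k2 h]; exact hl2⟩

lemma permLexLt_total {σ τ : Equiv.Perm (Fin (2 * n))} (hne : σ ≠ τ) :
    PermLexLt σ τ ∨ PermLexLt τ σ := by
  have hex : ∃ k, σ k ≠ τ k := by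
    by_contra hc
    push_neg at hc
    exact hne (Equiv.ext hc)
  obtain ⟨k, hk, hb⟩ := exists_first_diff hex
  rcases lt_or_gt_of_ne hk with h | h
  · exact Or.inl ⟨k, hb, h⟩
  · exact Or.inr ⟨k, fun j hj => (hb j hj).symm, h⟩

lemma canonical_mono {σ : Equiv.Perm (Fin (2 * n))} (hσ : IsCanonical σ) :
    ∀ (d : ℕ) (a b : Fin n), (b : ℕ) = (a : ℕ) + d + 1 →
      σ.symm (pA a) < σ.symm (pA b) := by
  intro d
  induction d with
  | zero => exact fun a b h => hσ.2 a b (by omega)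
  | succ d ih =>
    intro a b h
    have hc : (b : ℕ) - 1 < n := by have := b.isLt; omega
    exact (ih a ⟨(b : ℕ) - 1, hc⟩ (by simp; omega)).trans
      (hσ.2 ⟨(b : ℕ) - 1, hc⟩ b (by simp; omega))

lemma canonical_mono' {σ : Equiv.Perm (Fin (2 * n))} (hσ : IsCanonical σ)
    {a b : Fin n} (hab : a < b) : σ.symm (pA a) < σ.symm (pA b) := by
  have h : (a : ℕ) < (b : ℕ) := hab
  exact canonical_mono hσ ((b : ℕ) - (a : ℕ) - 1) a b (by omega)

/-- Key lemma: a canonical permutation is lexicographically smaller than any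
other member of its orbit. -/
lemma canonical_lexlt {σ h : Equiv.Perm (Fin (2 * n))} (hσ : IsCanonical σ)
    (hh : IsPairPerm h) (hne : h * σ ≠ σ) : PermLexLt σ (h * σ) := by
  have hP : PairCases h := (isPairPerm_iff h).1 hh
  have hex : ∃ k, (h * σ) k ≠ σ k := by
    by_contra hc
    push_neg at hc
    exact hne (Equiv.ext hc)
  obtain ⟨k, hk, hbelow⟩ := exists_first_diff hex
  have hfix : ∀ m : Fin (2 * n), σ.symm m < k → h m = m := by
    intro m hm
    have := hbelow (σ.symm m) hm
    simpa [Equiv.Perm.mul_apply] using this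
  have hmfix : h (σ k) ≠ σ k := by simpa [Equiv.Perm.mul_apply] using hk
  have hsymm_m : σ.symm (σ k) = k := Equiv.symm_apply_apply σ k
  obtain ⟨i, hi | hi⟩ := exists_pair (σ k)
  · -- σ k = pA i
    have hki : σ.symm (pA i) = k := by rw [← hi, hsymm_m]
    have hfixA : ∀ i' : Fin n, i' < i → h (pA i') = pA i' := by
      intro i' hi'
      exact hfix _ (by rw [← hki]; exact canonical_mono' hσ hi')
    obtain ⟨j, hj | hj⟩ := hP i
    · have hij : i < j := by
        rcases lt_trichotomy i j with h1 | h1 | h1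
        · exact h1
        · exact absurd (by rw [hi, hj.1, h1] : h (σ k) = σ k) hmfix
        · exact absurd (pA_inj (h.injective (by rw [hj.1, hfixA j h1])))
            (ne_of_gt h1)
      refine ⟨k, fun l hl => (hbelow l hl).symm, ?_⟩
      have : (h * σ) k = pA j := by rw [Equiv.Perm.mul_apply, hi, hj.1]
      rw [this, hi]
      exact pA_lt_pA hij
    · have hij : i ≤ j := by
        by_contra hcon
        push_neg at hcon
        have h1 := hfixA j hcon
        have h2 : h (pB j) = pB j := fixA_fixB hP h1
        exact pA_ne_pB i j (h.injective (by rw [hj.1, h2]))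
      refine ⟨k, fun l hl => (hbelow l hl).symm, ?_⟩
      have : (h * σ) k = pB j := by rw [Equiv.Perm.mul_apply, hi, hj.1]
      rw [this, hi]
      exact pA_lt_pB' hij
  · -- σ k = pB i : impossible
    exfalso
    have h1 : σ.symm (pA i) < k := by
      rw [← hsymm_m, hi]; exact hσ.1 i
    have h2 : h (pA i) = pA i := hfix _ h1
    exact hmfix (by rw [hi]; exact fixA_fixB hP h2)

/-- If `σ` is not canonical, some pair move strictly improves it lexicographically. -/
lemma exists_better {σ : Equiv.Perm (Fin (2 * n))} (hσ : ¬ IsCanonical σ) :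
    ∃ h : Equiv.Perm (Fin (2 * n)), IsPairPerm h ∧ PermLexLt (h * σ) σ := by
  rw [IsCanonical, not_and_or] at hσ
  rcases hσ with h1 | h2
  · push_neg at h1
    obtain ⟨i, hi⟩ := h1
    have hne : σ.symm (pB i) ≠ σ.symm (pA i) :=
      fun he => pA_ne_pB i i (σ.symm.injective he).symm
    have hlt : σ.symm (pB i) < σ.symm (pA i) := lt_of_le_of_ne hi hne
    refine ⟨Equiv.swap (pA i) (pB i), ?_, ?_⟩
    · rw [isPairPerm_iff]
      intro i'
      by_cases he : i' = i
      · subst he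
        exact ⟨i', Or.inr ⟨Equiv.swap_apply_left _ _, Equiv.swap_apply_right _ _⟩⟩
      · refine ⟨i', Or.inl ⟨?_, ?_⟩⟩
        · exact Equiv.swap_apply_of_ne_of_ne (fun hc => he (pA_inj hc))
            (pA_ne_pB i' i)
        · exact Equiv.swap_apply_of_ne_of_ne (fun hc => (pA_ne_pB i i' hc.symm))
            (fun hc => he (pB_inj hc))
    · refine ⟨σ.symm (pB i), ?_, ?_⟩
      · intro l hl
        simp only [Equiv.Perm.mul_apply]
        apply Equiv.swap_apply_of_ne_of_ne
        · intro hc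
          rw [← hc, Equiv.symm_apply_apply] at hlt
          exact absurd (hl.trans hlt) (lt_irrefl l)
        · intro hc
          rw [← hc, Equiv.symm_apply_apply] at hl
          exact lt_irrefl l hl
      · simp only [Equiv.Perm.mul_apply, Equiv.apply_symm_apply,
          Equiv.swap_apply_right]
        exact pA_lt_pB i
  · push_neg at h2
    obtain ⟨i, j, hji, hij⟩ := h2
    have hinej : i ≠ j := fun he => by rw [he] at hji; omega
    have hne : σ.symm (pA j) ≠ σ.symm (pA i) :=
      fun he => hinej (pA_inj (σ.symm.injective he)).symm
    have hlt : σ.symm (pA j) < σ.symm (pA i) := lt_of_le_of_ne hij hne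
    -- first canonical condition holds (else we are in case h1; but here we may
    -- i and j only, and if it fails we can use case-1 style move instead).
    by_cases hC1i : σ.symm (pA i) < σ.symm (pB i)
    case neg =>
      -- reuse case 1 argument with pair i
      have hne' : σ.symm (pB i) ≠ σ.symm (pA i) :=
        fun he => pA_ne_pB i i (σ.symm.injective he).symm
      have hlt' : σ.symm (pB i) < σ.symm (pA i) := lt_of_le_of_ne (not_lt.1 hC1i) hne'
      refine ⟨Equiv.swap (pA i) (pB i), ?_, ?_⟩
      · rw [isPairPerm_iff]
        intro i'
        by_cases he : i' = i
        · subst he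
          exact ⟨i', Or.inr ⟨Equiv.swap_apply_left _ _, Equiv.swap_apply_right _ _⟩⟩
        · refine ⟨i', Or.inl ⟨?_, ?_⟩⟩
          · exact Equiv.swap_apply_of_ne_of_ne (fun hc => he (pA_inj hc))
              (pA_ne_pB i' i)
          · exact Equiv.swap_apply_of_ne_of_ne (fun hc => (pA_ne_pB i i' hc.symm))
              (fun hc => he (pB_inj hc))
      · refine ⟨σ.symm (pB i), ?_, ?_⟩
        · intro l hl
          simp only [Equiv.Perm.mul_apply]
          apply Equiv.swap_apply_of_ne_of_ne
          · intro hc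
            rw [← hc, Equiv.symm_apply_apply] at hlt'
            exact absurd (hl.trans hlt') (lt_irrefl l)
          · intro hc
            rw [← hc, Equiv.symm_apply_apply] at hl
            exact lt_irrefl l hl
        · simp only [Equiv.Perm.mul_apply, Equiv.apply_symm_apply,
            Equiv.swap_apply_right]
          exact pA_lt_pB i
    case pos =>
    by_cases hC1j : σ.symm (pA j) < σ.symm (pB j)
    case neg =>
      have hne' : σ.symm (pB j) ≠ σ.symm (pA j) :=
        fun he => pA_ne_pB j j (σ.symm.injective he).symm
      have hlt' : σ.symm (pB j) < σ.symm (pA j) := lt_of_le_of_ne (not_lt.1 hC1j) hne'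
      refine ⟨Equiv.swap (pA j) (pB j), ?_, ?_⟩
      · rw [isPairPerm_iff]
        intro i'
        by_cases he : i' = j
        · subst he
          exact ⟨i', Or.inr ⟨Equiv.swap_apply_left _ _, Equiv.swap_apply_right _ _⟩⟩
        · refine ⟨i', Or.inl ⟨?_, ?_⟩⟩
          · exact Equiv.swap_apply_of_ne_of_ne (fun hc => he (pA_inj hc))
              (pA_ne_pB i' j)
          · exact Equiv.swap_apply_of_ne_of_ne (fun hc => (pA_ne_pB j i' hc.symm))
              (fun hc => he (pB_inj hc))
      · refine ⟨σ.symm (pB j), ?_, ?_⟩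
        · intro l hl
          simp only [Equiv.Perm.mul_apply]
          apply Equiv.swap_apply_of_ne_of_ne
          · intro hc
            rw [← hc, Equiv.symm_apply_apply] at hlt'
            exact absurd (hl.trans hlt') (lt_irrefl l)
          · intro hc
            rw [← hc, Equiv.symm_apply_apply] at hl
            exact lt_irrefl l hl
        · simp only [Equiv.Perm.mul_apply, Equiv.apply_symm_apply,
            Equiv.swap_apply_right]
          exact pA_lt_pB j
    case pos =>
      -- swap pair i with pair j
      set h : Equiv.Perm (Fin (2 * n)) :=
        Equiv.swap (pA i) (pA j) * Equiv.swap (pB i) (pB j) with hdef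
      have hAi : h (pA i) = pA j := by
        simp only [hdef, Equiv.Perm.mul_apply]
        rw [Equiv.swap_apply_of_ne_of_ne (pA_ne_pB i i) (pA_ne_pB i j),
          Equiv.swap_apply_left]
      have hAj : h (pA j) = pA i := by
        simp only [hdef, Equiv.Perm.mul_apply]
        rw [Equiv.swap_apply_of_ne_of_ne (pA_ne_pB j i) (pA_ne_pB j j),
          Equiv.swap_apply_right]
      have hBi : h (pB i) = pB j := by
        simp only [hdef, Equiv.Perm.mul_apply]
        rw [Equiv.swap_apply_left,
          Equiv.swap_apply_of_ne_of_ne (fun hc => pA_ne_pB i j hc.symm)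
            (fun hc => pA_ne_pB j j hc.symm)]
      have hBj : h (pB j) = pB i := by
        simp only [hdef, Equiv.Perm.mul_apply]
        rw [Equiv.swap_apply_right,
          Equiv.swap_apply_of_ne_of_ne (fun hc => pA_ne_pB i i hc.symm)
            (fun hc => pA_ne_pB j i hc.symm)]
      have hother : ∀ x : Fin (2 * n), x ≠ pA i → x ≠ pA j → x ≠ pB i → x ≠ pB j →
          h x = x := by
        intro x h1 h2 h3 h4
        simp only [hdef, Equiv.Perm.mul_apply]
        rw [Equiv.swap_apply_of_ne_of_ne h3 h4, Equiv.swap_apply_of_ne_of_ne h1 h2]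
      refine ⟨h, ?_, ?_⟩
      · rw [isPairPerm_iff]
        intro i'
        by_cases he : i' = i
        · subst he; exact ⟨j, Or.inl ⟨hAi, hBi⟩⟩
        by_cases he' : i' = j
        · subst he'; exact ⟨i, Or.inl ⟨hAj, hBj⟩⟩
        refine ⟨i', Or.inl ⟨?_, ?_⟩⟩
        · exact hother _ (fun hc => he (pA_inj hc)) (fun hc => he' (pA_inj hc))
            (pA_ne_pB i' i) (pA_ne_pB i' j)
        · exact hother _ (fun hc => pA_ne_pB i i' hc.symm)
            (fun hc => pA_ne_pB j i' hc.symm) (fun hc => he (pB_inj hc))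
            (fun hc => he' (pB_inj hc))
      · refine ⟨σ.symm (pA j), ?_, ?_⟩
        · intro l hl
          simp only [Equiv.Perm.mul_apply]
          apply hother
          · intro hc
            rw [← hc, Equiv.symm_apply_apply] at hlt
            exact absurd (hl.trans hlt) (lt_irrefl l)
          · intro hc
            rw [← hc, Equiv.symm_apply_apply] at hl
            exact lt_irrefl l hl
          · intro hc
            have : σ.symm (pA j) < σ.symm (pB i) := hlt.trans hC1i
            rw [← hc, Equiv.symm_apply_apply] at this
            exact absurd (hl.trans this) (lt_irrefl l)
          · intro hc
            rw [← hc, Equiv.symm_apply_apply] at hC1j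
            exact absurd (hl.trans hC1j) (lt_irrefl l)
        · simp only [Equiv.Perm.mul_apply, Equiv.apply_symm_apply, hAj]
          exact pA_lt_pA (show i < j from Fin.lt_def.2 (by omega))

lemma exists_min : ∀ (S : Finset (Equiv.Perm (Fin (2 * n)))), S.Nonempty →
    ∃ σ ∈ S, ∀ σ' ∈ S, σ' ≠ σ → PermLexLt σ σ' := by
  classical
  intro S
  induction S using Finset.induction_on with
  | empty => intro h; exact absurd h (by simp)
  | @insert a s ha ih =>
    intro _
    rcases s.eq_empty_or_nonempty with rfl | hs
    · exact ⟨a, by simp, by simp⟩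
    · obtain ⟨m, hmS, hmin⟩ := ih hs
      have ham : a ≠ m := fun he => ha (he ▸ hmS)
      rcases permLexLt_total ham with hca | hca
      · refine ⟨a, Finset.mem_insert_self a s, ?_⟩
        intro σ' hσ' hne
        rcases Finset.mem_insert.1 hσ' with rfl | hσ's
        · exact absurd rfl hne
        · by_cases he : σ' = m
          · exact he ▸ hca
          · exact permLexLt_trans hca (hmin σ' hσ's he)
      · refine ⟨m, Finset.mem_insert_of_mem hmS, ?_⟩
        intro σ' hσ' hne
        rcases Finset.mem_insert.1 hσ' with rfl | hσ's
        · exact hca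
        · exact hmin σ' hσ's hne

theorem unique_canonical_orbit_representative {n : ℕ} (hn : 1 ≤ n)
    (τ : Equiv.Perm (Fin (2 * n))) :
    (∃! σ : Equiv.Perm (Fin (2 * n)),
        (∃ g : Equiv.Perm (Fin (2 * n)), IsPairPerm g ∧ g * τ = σ) ∧ IsCanonical σ) ∧
    (∀ σ : Equiv.Perm (Fin (2 * n)),
        (∃ g : Equiv.Perm (Fin (2 * n)), IsPairPerm g ∧ g * τ = σ) → IsCanonical σ →
        ∀ σ' : Equiv.Perm (Fin (2 * n)),
          (∃ g : Equiv.Perm (Fin (2 * n)), IsPairPerm g ∧ g * τ = σ') → σ' ≠ σ →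
          PermLexLt σ σ') := by
  classical
  set P : Equiv.Perm (Fin (2 * n)) → Prop :=
    fun σ => ∃ g : Equiv.Perm (Fin (2 * n)), IsPairPerm g ∧ g * τ = σ with hPdef
  have part2 : ∀ σ, P σ → IsCanonical σ → ∀ σ', P σ' → σ' ≠ σ → PermLexLt σ σ' := by
    rintro σ ⟨g, hg, rfl⟩ hcanσ σ' ⟨g', hg', rfl⟩ hne
    set h := g' * g⁻¹ with hhdef
    have hhp : IsPairPerm h := by
      rw [isPairPerm_iff]
      exact pairCases_mul ((isPairPerm_iff g').1 hg')
        (pairCases_inv ((isPairPerm_iff g).1 hg))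
    have he : h * (g * τ) = g' * τ := by
      rw [hhdef, mul_assoc, inv_mul_cancel_left]
    have := canonical_lexlt hcanσ hhp (he.symm ▸ hne)
    rwa [he] at this
  have hclosed : ∀ σ, P σ → ∀ h, IsPairPerm h → P (h * σ) := by
    rintro σ ⟨g, hg, rfl⟩ h hh
    refine ⟨h * g, ?_, (mul_assoc h g τ).symm⟩
    rw [isPairPerm_iff]
    exact pairCases_mul ((isPairPerm_iff h).1 hh) ((isPairPerm_iff g).1 hg)
  let S : Finset (Equiv.Perm (Fin (2 * n))) := Finset.univ.filter P
  have hmemS : ∀ σ, σ ∈ S ↔ P σ := by intro σ; simp [S]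
  have hτP : P τ := ⟨1, by rw [isPairPerm_iff]; exact pairCases_one, one_mul τ⟩
  obtain ⟨σ₀, hσ₀S, hmin⟩ := exists_min S ⟨τ, (hmemS τ).2 hτP⟩
  have hσ₀P : P σ₀ := (hmemS σ₀).1 hσ₀S
  have hcan : IsCanonical σ₀ := by
    by_contra hnc
    obtain ⟨h, hh, hlt⟩ := exists_better hnc
    have hmem : h * σ₀ ∈ S := (hmemS _).2 (hclosed _ hσ₀P h hh)
    have hne : h * σ₀ ≠ σ₀ := by
      intro heq
      rw [heq] at hlt
      exact permLexLt_asymm hlt hlt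
    exact permLexLt_asymm (hmin _ hmem hne) hlt
  refine ⟨⟨σ₀, ⟨hσ₀P, hcan⟩, ?_⟩, part2⟩
  rintro σ ⟨hPσ, hcσ⟩
  by_contra hne
  exact permLexLt_asymm (part2 σ hPσ hcσ σ₀ hσ₀P (Ne.symm hne))
    (part2 σ₀ hσ₀P hcan σ hPσ hne)

end Stmt2
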